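/- Under the setting of the energy identity, with A strongly monotone (constant α) and Lipschitz (constant L), for w' = w (the linearization point) and any v ∈ X_H: d²(v, w) ≥ -(L/2)‖v - w‖² + a(w; u^{k,⋆} - w, v - w) and d²(v, w) ≤ -(α/2)‖v - w‖² + a(w; u^{k,⋆} - w, v - w). -/

import Mathlib

lemma aux_mono_le {f f' : ℝ → ℝ} (hf : ∀ t, HasDerivAt f (f' t) t)
    (h : ∀ t ∈ Set.Ioo (0:ℝ) 1, 0 ≤ f' t) : f 0 ≤ f 1 := by
  have hm : MonotoneOn f (Set.Icc 0 1) := by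
    apply monotoneOn_of_deriv_nonneg (convex_Icc 0 1)
    · exact fun t _ => (hf t).differentiableAt.continuousAt.continuousWithinAt
    · intro t _; exact (hf t).differentiableAt.differentiableWithinAt
    · intro t ht
      rw [interior_Icc] at ht
      rw [(hf t).deriv]
      exact h t ht
  exact hm (by norm_num) (by norm_num) zero_le_one

/-- Two-sided bounds on the energy difference at the linearization point. -/
theorem energy_bounds_at_linearization_point
    {X : Type*} [NormedAddCommGroup X] [InnerProductSpace ℝ X] [CompleteSpace X]
    (A : X → X →L[ℝ] ℝ) (F : X →L[ℝ] ℝ) (E : X → ℝ)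
    (a : X → X → X → ℝ) (α L : ℝ)
    (hα : 0 < α) (hαL : α ≤ L)
    (hmono : ∀ u v : X, α * ‖u - v‖ ^ 2 ≤ A u (u - v) - A v (u - v))
    (hlip : ∀ u v w : X, A u w - A v w ≤ L * ‖u - v‖ * ‖w‖)
    (hE : ∀ u d : X, ∀ t : ℝ, HasDerivAt (fun s : ℝ => E (u + s • d))
      (A (u + t • d) d - F d) t)
    (XH : Submodule ℝ X) (hXH : IsClosed (XH : Set X))
    (w : X) (hw : w ∈ XH)
    (ukstar : X) (hukstar : ukstar ∈ XH)
    (hlin : ∀ v ∈ XH, a w (ukstar - w) v = F v - A w v) :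
    ∀ v ∈ XH,
      -(L / 2) * ‖v - w‖ ^ 2 + a w (ukstar - w) (v - w) ≤ E w - E v ∧
      E w - E v ≤ -(α / 2) * ‖v - w‖ ^ 2 + a w (ukstar - w) (v - w) := by
  intro v hv
  set d := v - w with hd
  have hdXH : d ∈ XH := XH.sub_mem hv hw
  have hlin' : a w (ukstar - w) d = F d - A w d := hlin d hdXH
  have hvd : w + (1:ℝ) • d = v := by simp [hd]
  have hw0 : w + (0:ℝ) • d = w := by simp
  -- derivative facts for the quadratic pieces
  have hq : ∀ c t : ℝ, HasDerivAt (fun s : ℝ => c * (s ^ 2 / 2)) (c * t) t := by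
    intro c t
    have := ((hasDerivAt_pow 2 t).div_const 2).const_mul c
    refine this.congr_deriv ?_
    ring
  have hl : ∀ c t : ℝ, HasDerivAt (fun s : ℝ => c * s) c t := by
    intro c t
    simpa using (hasDerivAt_id t).const_mul c
  constructor
  · -- lower bound via Lipschitz
    have key : (fun t : ℝ => (A w d - F d) * t + L * ‖d‖ ^ 2 * (t ^ 2 / 2)
        - E (w + t • d)) 0 ≤ (fun t : ℝ => (A w d - F d) * t + L * ‖d‖ ^ 2 * (t ^ 2 / 2)
        - E (w + t • d)) 1 := by
      apply aux_mono_le (f := fun t : ℝ => (A w d - F d) * t + L * ‖d‖ ^ 2 * (t ^ 2 / 2) - E (w + t • d)) (f' := fun t => (A w d - F d) + L * ‖d‖ ^ 2 * t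
        - (A (w + t • d) d - F d))
      · intro t
        exact ((hl (A w d - F d) t).add (hq (L * ‖d‖ ^ 2) t)).sub (hE w d t)
      · intro t ht
        have h1 := hlip (w + t • d) w d
        have h2 : A (w + t • d) d - A w d ≤ L * (t * ‖d‖) * ‖d‖ := by
          have : ‖w + t • d - w‖ = t * ‖d‖ := by
            rw [add_sub_cancel_left, norm_smul, Real.norm_eq_abs,
              abs_of_pos ht.1]
          rw [this] at h1
          exact h1
        nlinarith [ht.1, ht.2]
    simp only [hvd, hw0] at key
    norm_num at key
    nlinarith [key]
  · -- upper bound via strong monotonicity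
    have key : (fun t : ℝ => E (w + t • d) - (A w d - F d) * t
        - α * ‖d‖ ^ 2 * (t ^ 2 / 2)) 0 ≤ (fun t : ℝ => E (w + t • d) - (A w d - F d) * t
        - α * ‖d‖ ^ 2 * (t ^ 2 / 2)) 1 := by
      apply aux_mono_le (f := fun t : ℝ => E (w + t • d) - (A w d - F d) * t - α * ‖d‖ ^ 2 * (t ^ 2 / 2)) (f' := fun t => (A (w + t • d) d - F d) - (A w d - F d)
        - α * ‖d‖ ^ 2 * t)
      · intro t
        exact ((hE w d t).sub (hl (A w d - F d) t)).sub (hq (α * ‖d‖ ^ 2) t)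
      · intro t ht
        have h1 := hmono (w + t • d) w
        have h2 : α * (t * ‖d‖) ^ 2 ≤ t * (A (w + t • d) d - A w d) := by
          have he : w + t • d - w = t • d := add_sub_cancel_left w (t • d)
          rw [he] at h1
          have hn : ‖t • d‖ = t * ‖d‖ := by
            rw [norm_smul, Real.norm_eq_abs, abs_of_pos ht.1]
          rw [hn] at h1
          simpa [map_smul, smul_eq_mul, mul_sub] using h1
        nlinarith [ht.1, ht.2]
    simp only [hvd, hw0] at key
    norm_num at key
    nlinarith [key]
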